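/- arXiv:1409.8379 — 3 statements merged into one kernel-verified Lean document; each statement's English description precedes it below -/
import Mathlib

section
/- The double power nonlinearity satisfies the kink assumption: let 0 < α < β and define, for s ≥ 0, f(s) = s^{1+α} − s^{1+β} (this is the restriction to nonnegative reals of f(u) = |u|^α u − |u|^β u). Then there exist ω₀ > 0 and b > 0 such that, for h(s) := ω₀·s − f(s) = ω₀·s − s^{1+α} + s^{1+β}, one has: h(b) = 0, h'(b) > 0, and ∫₀^b h(s) ds = 0. -/
/-- The double power nonlinearity satisfies the kink assumption: for `0 < α < β` and
`f(s) = s^{1+α} − s^{1+β}` (the restriction to nonnegative reals of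
`f(u) = |u|^α u − |u|^β u`), there exist `ω₀ > 0` and `b > 0` such that
`h(s) := ω₀ s − f(s) = ω₀ s − s^{1+α} + s^{1+β}` satisfies `h(b) = 0`, `h'(b) > 0` and
`∫₀^b h(s) ds = 0`. -/
theorem double_power_satisfies_kink_assumption (α β : ℝ) (hα : 0 < α) (hαβ : α < β) :
    ∃ ω₀ : ℝ, 0 < ω₀ ∧ ∃ b : ℝ, 0 < b ∧
      (ω₀ * b - b ^ (1 + α) + b ^ (1 + β) = 0) ∧
      (0 < deriv (fun s : ℝ => ω₀ * s - s ^ (1 + α) + s ^ (1 + β)) b) ∧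
      (∫ s in (0:ℝ)..b, (ω₀ * s - s ^ (1 + α) + s ^ (1 + β))) = 0 := by
  have hβ : 0 < β := hα.trans hαβ
  have h2α : (0:ℝ) < 2 + α := by linarith
  have h2β : (0:ℝ) < 2 + β := by linarith
  have hd : 0 < β - α := by linarith
  set c : ℝ := α * (2 + β) / (β * (2 + α)) with hc
  have hc0 : 0 < c := by positivity
  have hc1 : c < 1 := by
    rw [hc, div_lt_one (by positivity)]
    nlinarith
  set b : ℝ := c ^ ((β - α)⁻¹) with hbdef
  have hb : 0 < b := Real.rpow_pos_of_pos hc0 _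
  have hbα : 0 < b ^ α := Real.rpow_pos_of_pos hb _
  have hbc : b ^ (β - α) = c := by
    rw [hbdef, ← Real.rpow_mul hc0.le, inv_mul_cancel₀ hd.ne', Real.rpow_one]
  have hbβ : b ^ β = b ^ α * c := by
    rw [← hbc, ← Real.rpow_add hb]
    congr 1
    ring
  have e1 : b ^ (1 + α) = b * b ^ α := by rw [Real.rpow_add hb, Real.rpow_one]
  have e2 : b ^ (1 + β) = b * b ^ β := by rw [Real.rpow_add hb, Real.rpow_one]
  have e3 : b ^ (2 + α) = b ^ 2 * b ^ α := by
    rw [Real.rpow_add hb]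
    norm_num [Real.rpow_natCast]
  have e4 : b ^ (2 + β) = b ^ 2 * b ^ β := by
    rw [Real.rpow_add hb]
    norm_num [Real.rpow_natCast]
  have hβc : α < β * c := by
    have hbc' : β * c = α * (2 + β) / (2 + α) := by
      rw [hc]; field_simp
    rw [hbc', lt_div_iff₀ h2α]
    nlinarith
  refine ⟨b ^ α * (1 - c), by nlinarith, b, hb, ?_, ?_, ?_⟩
  · rw [e1, e2, hbβ]; ring
  · have hder : HasDerivAt (fun s : ℝ => b ^ α * (1 - c) * s - s ^ (1 + α) + s ^ (1 + β))
        (b ^ α * (1 - c) * 1 - (1 + α) * b ^ (1 + α - 1) + (1 + β) * b ^ (1 + β - 1)) b := by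
      exact (((hasDerivAt_id b).const_mul (b ^ α * (1 - c))).sub
        (Real.hasDerivAt_rpow_const (Or.inr (by linarith)))).add
        (Real.hasDerivAt_rpow_const (Or.inr (by linarith)))
    rw [hder.deriv]
    have r1 : 1 + α - 1 = α := by ring
    have r2 : 1 + β - 1 = β := by ring
    rw [r1, r2, hbβ]
    nlinarith
  · have i1 : IntervalIntegrable (fun s : ℝ => s ^ (1 + α)) MeasureTheory.volume 0 b :=
      intervalIntegral.intervalIntegrable_rpow (Or.inl (by linarith))
    have i2 : IntervalIntegrable (fun s : ℝ => s ^ (1 + β)) MeasureTheory.volume 0 b :=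
      intervalIntegral.intervalIntegrable_rpow (Or.inl (by linarith))
    have i0 : IntervalIntegrable (fun s : ℝ => b ^ α * (1 - c) * s) MeasureTheory.volume 0 b :=
      intervalIntegral.intervalIntegrable_id.const_mul _
    rw [intervalIntegral.integral_add (i0.sub i1) i2, intervalIntegral.integral_sub i0 i1,
      intervalIntegral.integral_const_mul, integral_id,
      integral_rpow (Or.inl (by linarith)), integral_rpow (Or.inl (by linarith))]
    rw [Real.zero_rpow (by linarith : (1:ℝ) + α + 1 ≠ 0),
      Real.zero_rpow (by linarith : (1:ℝ) + β + 1 ≠ 0)]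
    have r3 : 1 + α + 1 = 2 + α := by ring
    have r4 : 1 + β + 1 = 2 + β := by ring
    rw [r3, r4, e3, e4, hbβ]
    have hcval : (1 - c) / 2 - 1 / (2 + α) + c / (2 + β) = 0 := by
      rw [hc]; field_simp; ring
    linear_combination (b ^ 2 * b ^ α) * hcval
end

section
/- Existence of the kink profile: let ω₀ > 0 and let f : ℝ → ℝ be continuously differentiable with f(0) = 0 and f'(0) = 0; set h(s) := ω₀·s − f(s) and H(s) := ∫₀^s h(r) dr. Assume there is b > 0 such that h(b) = 0, h'(b) > 0, H(b) = 0, and H(s) > 0 for all s ∈ (0, b). Then there exists a twice continuously differentiable function φ_K : ℝ → ℝ such that: (i) −φ_K''(x) + ω₀·φ_K(x) − f(φ_K(x)) = 0 for all x ∈ ℝ; (ii) 0 < φ_K(x) < b for all x and φ_K is strictly decreasing; (iii) φ_K(x) → b as x → −∞ and φ_K(x) → 0 as x → +∞. -/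
open Filter Set MeasureTheory intervalIntegral

namespace KinkProofAux

noncomputable def HH (ω₀ : ℝ) (f : ℝ → ℝ) (u : ℝ) : ℝ := ∫ r in (0:ℝ)..u, (ω₀ * r - f r)

noncomputable def FF (ω₀ : ℝ) (f : ℝ → ℝ) (s : ℝ) : ℝ := (Real.sqrt (2 * HH ω₀ f s))⁻¹

noncomputable def XX (ω₀ : ℝ) (f : ℝ → ℝ) (b : ℝ) (u : ℝ) : ℝ := ∫ s in u..(b/2), FF ω₀ f s

variable {ω₀ : ℝ} {f : ℝ → ℝ} {b : ℝ}

lemma hcont (hc : Continuous f) : Continuous fun s : ℝ => ω₀ * s - f s := by continuity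

lemma HH_hasDeriv (hc : Continuous f) (u : ℝ) :
    HasDerivAt (HH ω₀ f) (ω₀ * u - f u) u := by
  have h := hcont (ω₀ := ω₀) hc
  exact intervalIntegral.integral_hasDerivAt_right (h.intervalIntegrable _ _)
    h.stronglyMeasurable.stronglyMeasurableAtFilter h.continuousAt

lemma HH_cont (hc : Continuous f) : Continuous (HH ω₀ f) :=
  continuous_iff_continuousAt.2 fun u => (HH_hasDeriv hc u).continuousAt

section

variable (hHpos : ∀ s ∈ Set.Ioo (0:ℝ) b, 0 < HH ω₀ f s)
include hHpos

lemma sqrt_pos' {s : ℝ} (hs : s ∈ Set.Ioo (0:ℝ) b) : 0 < Real.sqrt (2 * HH ω₀ f s) :=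
  Real.sqrt_pos.2 (by have := hHpos s hs; linarith)

lemma FF_pos {s : ℝ} (hs : s ∈ Set.Ioo (0:ℝ) b) : 0 < FF ω₀ f s :=
  inv_pos.2 (sqrt_pos' hHpos hs)

lemma FF_contOn (hc : Continuous f) : ContinuousOn (FF ω₀ f) (Set.Ioo 0 b) :=
  ((Real.continuous_sqrt.comp (continuous_const.mul (HH_cont hc))).continuousOn).inv₀
    fun s hs => (sqrt_pos' hHpos hs).ne'

lemma FF_integrable (hc : Continuous f) {u v : ℝ} (hu : u ∈ Set.Ioo (0:ℝ) b)
    (hv : v ∈ Set.Ioo (0:ℝ) b) : IntervalIntegrable (FF ω₀ f) volume u v :=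
  ((FF_contOn hHpos hc).mono (Set.ordConnected_Ioo.uIcc_subset hu hv)).intervalIntegrable

lemma XX_hasDeriv (hc : Continuous f) (hb : 0 < b) {u : ℝ} (hu : u ∈ Set.Ioo (0:ℝ) b) :
    HasDerivAt (XX ω₀ f b) (-(FF ω₀ f u)) u := by
  have hhalf : b / 2 ∈ Set.Ioo (0:ℝ) b := ⟨by linarith, by linarith⟩
  have hG : HasDerivAt (fun v => ∫ s in (b/2)..v, FF ω₀ f s) (FF ω₀ f u) u :=
    intervalIntegral.integral_hasDerivAt_right (FF_integrable hHpos hc hhalf hu)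
      ((FF_contOn hHpos hc).stronglyMeasurableAtFilter isOpen_Ioo u hu)
      (((FF_contOn hHpos hc) u hu).continuousAt (isOpen_Ioo.mem_nhds hu))
  have hXX : XX ω₀ f b = fun v => -∫ s in (b/2)..v, FF ω₀ f s := by
    funext v; exact intervalIntegral.integral_symm _ _
  rw [hXX]; exact hG.neg

lemma XX_sub (hc : Continuous f) {u v : ℝ} (hu : u ∈ Set.Ioo (0:ℝ) b)
    (hv : v ∈ Set.Ioo (0:ℝ) b) :
    XX ω₀ f b u - XX ω₀ f b v = ∫ s in u..v, FF ω₀ f s := by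
  have hhalf : b / 2 ∈ Set.Ioo (0:ℝ) b := ⟨by linarith [hu.1, hu.2, hv.1, hv.2], by nlinarith [hu.1, hu.2, hv.1, hv.2]⟩
  have h := intervalIntegral.integral_add_adjacent_intervals (μ := volume)
    (FF_integrable hHpos hc hu hv) (FF_integrable hHpos hc hv hhalf)
  unfold XX
  linarith [h]

lemma XX_anti (hc : Continuous f) {u v : ℝ} (hu : u ∈ Set.Ioo (0:ℝ) b)
    (hv : v ∈ Set.Ioo (0:ℝ) b) (huv : u < v) : XX ω₀ f b v < XX ω₀ f b u := by
  have hpos : 0 < ∫ s in u..v, FF ω₀ f s :=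
    intervalIntegral.intervalIntegral_pos_of_pos_on (FF_integrable hHpos hc hu hv)
      (fun x hx => FF_pos hHpos ⟨lt_trans hu.1 hx.1, lt_trans hx.2 hv.2⟩) huv
  have := XX_sub hHpos hc hu hv
  linarith

lemma Xtop (hc : Continuous f) (hb : 0 < b) {C : ℝ} (hCpos : 0 < C)
    (hbd1 : ∀ s ∈ Set.Icc (0:ℝ) b, 2 * HH ω₀ f s ≤ C * s ^ 2) :
    Tendsto (XX ω₀ f b) (nhdsWithin 0 (Set.Ioi 0)) atTop := by
  have halfmem : b / 2 ∈ Set.Ioo (0:ℝ) b := ⟨by linarith, by linarith⟩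
  have hsC : 0 < Real.sqrt C := Real.sqrt_pos.2 hCpos
  rw [tendsto_atTop]
  intro M
  set δ := min (b/2) ((b/2) * Real.exp (-(M * Real.sqrt C))) with hδdef
  have hδpos : 0 < δ := lt_min (by linarith) (by positivity)
  have hδle : δ ≤ b/2 := min_le_left _ _
  filter_upwards [Ioc_mem_nhdsGT_of_mem (show (0:ℝ) ∈ Set.Ico 0 δ from ⟨le_rfl, hδpos⟩)]
    with u hu
  have hu0 : 0 < u := hu.1
  have huδ : u ≤ δ := hu.2
  have humem : u ∈ Set.Ioo 0 b := ⟨hu0, by linarith⟩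
  have hlow : ∀ s ∈ Set.Icc u (b/2), (Real.sqrt C * s)⁻¹ ≤ FF ω₀ f s := by
    intro s hsm
    have hsIoo : s ∈ Set.Ioo 0 b := ⟨lt_of_lt_of_le hu0 hsm.1, by linarith [hsm.2]⟩
    have h1 : Real.sqrt (2 * HH ω₀ f s) ≤ Real.sqrt C * s := by
      have := Real.sqrt_le_sqrt (hbd1 s ⟨hsIoo.1.le, hsIoo.2.le⟩)
      rwa [Real.sqrt_mul hCpos.le, Real.sqrt_sq hsIoo.1.le] at this
    exact inv_anti₀ (sqrt_pos' hHpos hsIoo) h1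
  have hile : (∫ s in u..(b/2), (Real.sqrt C * s)⁻¹) ≤ XX ω₀ f b u := by
    apply intervalIntegral.integral_mono_on (by linarith)
      (ContinuousOn.intervalIntegrable_of_Icc (by linarith) ?_)
      (FF_integrable hHpos hc humem halfmem) hlow
    apply ContinuousOn.inv₀ (by fun_prop)
    intro s hsm
    have : 0 < s := lt_of_lt_of_le hu0 hsm.1
    positivity
  have hval : (∫ s in u..(b/2), (Real.sqrt C * s)⁻¹)
      = (Real.sqrt C)⁻¹ * Real.log ((b/2)/u) := by
    have heq : ∀ s : ℝ, (Real.sqrt C * s)⁻¹ = (Real.sqrt C)⁻¹ * (1/s) := by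
      intro s; rw [mul_inv]; ring
    simp_rw [heq]
    rw [intervalIntegral.integral_const_mul, integral_one_div]
    intro h0
    rcases Set.mem_uIcc.1 h0 with h | h
    · linarith [h.1]
    · linarith [h.1, h.2]
  have hloglb : M * Real.sqrt C ≤ Real.log ((b/2)/u) := by
    rw [Real.le_log_iff_exp_le (by positivity)]
    rw [le_div_iff₀ hu0]
    have h1 : u ≤ (b/2) * Real.exp (-(M * Real.sqrt C)) := le_trans huδ (min_le_right _ _)
    calc Real.exp (M * Real.sqrt C) * u
        ≤ Real.exp (M * Real.sqrt C) * ((b/2) * Real.exp (-(M * Real.sqrt C))) := by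
          apply mul_le_mul_of_nonneg_left h1 (Real.exp_pos _).le
      _ = b/2 := by rw [Real.exp_neg]; field_simp
  calc M = (Real.sqrt C)⁻¹ * (M * Real.sqrt C) := by field_simp
    _ ≤ (Real.sqrt C)⁻¹ * Real.log ((b/2)/u) :=
        mul_le_mul_of_nonneg_left hloglb (by positivity)
    _ = ∫ s in u..(b/2), (Real.sqrt C * s)⁻¹ := hval.symm
    _ ≤ XX ω₀ f b u := hile

lemma Xbot (hc : Continuous f) (hb : 0 < b) {C : ℝ} (hCpos : 0 < C)
    (hbd2 : ∀ s ∈ Set.Icc (0:ℝ) b, 2 * HH ω₀ f s ≤ C * (b - s) ^ 2) :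
    Tendsto (XX ω₀ f b) (nhdsWithin b (Set.Iio b)) atBot := by
  have halfmem : b / 2 ∈ Set.Ioo (0:ℝ) b := ⟨by linarith, by linarith⟩
  have hsC : 0 < Real.sqrt C := Real.sqrt_pos.2 hCpos
  rw [tendsto_atBot]
  intro M
  set δ := min (b/2) ((b/2) * Real.exp (M * Real.sqrt C)) with hδdef
  have hδpos : 0 < δ := lt_min (by linarith) (by positivity)
  have hδle : δ ≤ b/2 := min_le_left _ _
  filter_upwards [Ico_mem_nhdsLT_of_mem (show b ∈ Set.Ioc (b - δ) b from ⟨by linarith, le_rfl⟩)]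
    with u hu
  have hub : u < b := hu.2
  have hu1 : b - δ ≤ u := hu.1
  have hbu : 0 < b - u := by linarith
  have hbuδ : b - u ≤ δ := by linarith
  have humem : u ∈ Set.Ioo 0 b := ⟨by linarith, hub⟩
  have hhalfu : b / 2 ≤ u := by linarith
  have hlow : ∀ s ∈ Set.Icc (b/2) u, (Real.sqrt C * (b - s))⁻¹ ≤ FF ω₀ f s := by
    intro s hsm
    have hsIoo : s ∈ Set.Ioo 0 b := ⟨by linarith [hsm.1], lt_of_le_of_lt hsm.2 hub⟩
    have h1 : Real.sqrt (2 * HH ω₀ f s) ≤ Real.sqrt C * (b - s) := by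
      have := Real.sqrt_le_sqrt (hbd2 s ⟨hsIoo.1.le, hsIoo.2.le⟩)
      rwa [Real.sqrt_mul hCpos.le, Real.sqrt_sq (by linarith [hsIoo.2] : (0:ℝ) ≤ b - s)] at this
    exact inv_anti₀ (sqrt_pos' hHpos hsIoo) h1
  have hile : (∫ s in (b/2)..u, (Real.sqrt C * (b - s))⁻¹) ≤ ∫ s in (b/2)..u, FF ω₀ f s := by
    apply intervalIntegral.integral_mono_on hhalfu
      (ContinuousOn.intervalIntegrable_of_Icc hhalfu ?_)
      (FF_integrable hHpos hc halfmem humem) hlow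
    apply ContinuousOn.inv₀ (by fun_prop)
    intro s hsm
    have : 0 < b - s := by linarith [hsm.2]
    positivity
  have hXXu : XX ω₀ f b u = -(∫ s in (b/2)..u, FF ω₀ f s) := by
    unfold XX; rw [intervalIntegral.integral_symm]
  have hval : (∫ s in (b/2)..u, (Real.sqrt C * (b - s))⁻¹)
      = (Real.sqrt C)⁻¹ * Real.log ((b - b/2)/(b - u)) := by
    have heq : ∀ s : ℝ, (Real.sqrt C * (b - s))⁻¹ = (Real.sqrt C)⁻¹ * (1/(b - s)) := by
      intro s; rw [mul_inv]; ring
    simp_rw [heq]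
    rw [intervalIntegral.integral_const_mul]
    congr 1
    have hcomp := intervalIntegral.integral_comp_sub_left (a := b/2) (b := u)
      (fun x : ℝ => 1/x) b
    rw [hcomp, integral_one_div (by
      intro h0
      rcases Set.mem_uIcc.1 h0 with h | h
      · linarith [h.1]
      · linarith [h.1, h.2])]
  have hloglb : -(M * Real.sqrt C) ≤ Real.log ((b - b/2)/(b - u)) := by
    have hbb2 : 0 < b - b/2 := by linarith
    rw [Real.le_log_iff_exp_le (by positivity)]
    rw [le_div_iff₀ hbu]
    have h1 : b - u ≤ (b/2) * Real.exp (M * Real.sqrt C) := le_trans hbuδ (min_le_right _ _)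
    calc Real.exp (-(M * Real.sqrt C)) * (b - u)
        ≤ Real.exp (-(M * Real.sqrt C)) * ((b/2) * Real.exp (M * Real.sqrt C)) := by
          apply mul_le_mul_of_nonneg_left h1 (Real.exp_pos _).le
      _ = b/2 := by rw [Real.exp_neg]; field_simp
      _ ≤ b - b/2 := by linarith
  calc XX ω₀ f b u = -(∫ s in (b/2)..u, FF ω₀ f s) := hXXu
    _ ≤ -(∫ s in (b/2)..u, (Real.sqrt C * (b - s))⁻¹) := neg_le_neg hile
    _ = -((Real.sqrt C)⁻¹ * Real.log ((b - b/2)/(b - u))) := by rw [hval]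
    _ ≤ -((Real.sqrt C)⁻¹ * (-(M * Real.sqrt C))) := by
        apply neg_le_neg
        exact mul_le_mul_of_nonneg_left hloglb (by positivity)
    _ = M := by field_simp

lemma XX_surj (hc : Continuous f) (hb : 0 < b) {C : ℝ} (hCpos : 0 < C)
    (hbd1 : ∀ s ∈ Set.Icc (0:ℝ) b, 2 * HH ω₀ f s ≤ C * s ^ 2)
    (hbd2 : ∀ s ∈ Set.Icc (0:ℝ) b, 2 * HH ω₀ f s ≤ C * (b - s) ^ 2) (y : ℝ) :
    ∃ u, u ∈ Set.Ioo 0 b ∧ XX ω₀ f b u = y := by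
  have htop := Xtop hHpos hc hb hCpos hbd1
  have hbot := Xbot hHpos hc hb hCpos hbd2
  have h1 : ∀ᶠ u in nhdsWithin 0 (Set.Ioi 0), y ≤ XX ω₀ f b u :=
    htop.eventually (eventually_ge_atTop y)
  have h1' : ∀ᶠ u in nhdsWithin 0 (Set.Ioi (0:ℝ)), u ∈ Set.Ioo (0:ℝ) b :=
    Ioo_mem_nhdsGT_of_mem ⟨le_rfl, hb⟩
  obtain ⟨u₁, hy1, hu₁⟩ := (h1.and h1').exists
  have h2 : ∀ᶠ u in nhdsWithin b (Set.Iio b), XX ω₀ f b u ≤ y :=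
    hbot.eventually (eventually_le_atBot y)
  have h2' : ∀ᶠ u in nhdsWithin b (Set.Iio b), u ∈ Set.Ioo (0:ℝ) b :=
    Ioo_mem_nhdsLT_of_mem ⟨hb, le_rfl⟩
  obtain ⟨u₂, hy2, hu₂⟩ := (h2.and h2').exists
  rcases lt_trichotomy u₁ u₂ with h | h | h
  · have hsub : Set.Icc u₁ u₂ ⊆ Set.Ioo 0 b := fun x hx =>
      ⟨lt_of_lt_of_le hu₁.1 hx.1, lt_of_le_of_lt hx.2 hu₂.2⟩
    have hcontOn : ContinuousOn (XX ω₀ f b) (Set.Icc u₁ u₂) := fun x hx =>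
      ((XX_hasDeriv hHpos hc hb (hsub hx)).continuousAt).continuousWithinAt
    obtain ⟨u, hu, hXu⟩ := intermediate_value_Icc' h.le hcontOn ⟨hy2, hy1⟩
    exact ⟨u, hsub hu, hXu⟩
  · subst h
    exact ⟨u₁, hu₁, le_antisymm hy2 hy1⟩
  · have := XX_anti hHpos hc hu₂ hu₁ h
    linarith

end



lemma exists_bound (hf : ContDiff ℝ 1 f) (hf0 : f 0 = 0) (hb : 0 < b)
    (hhb : ω₀ * b - f b = 0) (hHb : HH ω₀ f b = 0) :
    ∃ C : ℝ, 0 < C ∧ ∀ s ∈ Set.Icc (0:ℝ) b,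
      2 * HH ω₀ f s ≤ C * s ^ 2 ∧ 2 * HH ω₀ f s ≤ C * (b - s) ^ 2 := by
  have hc : Continuous f := hf.continuous
  have hc' : Continuous fun s : ℝ => ω₀ * s - f s := by continuity
  have hder : ∀ s : ℝ, HasDerivAt (fun s => ω₀ * s - f s) (ω₀ - deriv f s) s := by
    intro s
    exact (((hasDerivAt_id' s).const_mul ω₀).sub (hf.differentiable one_ne_zero s).hasDerivAt).congr_deriv (by ring)
  have hderiv_eq : deriv (fun s : ℝ => ω₀ * s - f s) = fun s => ω₀ - deriv f s :=
    funext fun s => (hder s).deriv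
  have hdercont : Continuous fun s : ℝ => ω₀ - deriv f s :=
    continuous_const.sub (hf.continuous_deriv le_rfl)
  obtain ⟨C₀, hC₀⟩ := (isCompact_Icc (a := (0:ℝ)) (b := b)).exists_bound_of_continuousOn
    hdercont.continuousOn
  set C : ℝ := max C₀ 0 + 1 with hCdef
  have hCpos : 0 < C := by positivity
  have hCb : ∀ x ∈ Set.Icc (0:ℝ) b, ‖deriv (fun s : ℝ => ω₀ * s - f s) x‖ ≤ C := by
    intro x hx
    rw [hderiv_eq]
    have := hC₀ x hx
    calc ‖ω₀ - deriv f x‖ ≤ C₀ := this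
      _ ≤ C := by simp [hCdef]; linarith [le_max_left C₀ (0:ℝ)]
  have hlip : ∀ s ∈ Set.Icc (0:ℝ) b, ∀ t ∈ Set.Icc (0:ℝ) b,
      |(ω₀ * s - f s) - (ω₀ * t - f t)| ≤ C * |s - t| := by
    intro s hs t ht
    have := Convex.norm_image_sub_le_of_norm_deriv_le (f := fun s : ℝ => ω₀ * s - f s)
      (s := Set.Icc 0 b) (fun x _ => (hder x).differentiableAt) hCb (convex_Icc 0 b) ht hs
    simpa [Real.norm_eq_abs] using this
  have habs1 : ∀ s ∈ Set.Icc (0:ℝ) b, |ω₀ * s - f s| ≤ C * s := by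
    intro s hs
    have h0 : (0:ℝ) ∈ Set.Icc (0:ℝ) b := ⟨le_rfl, hb.le⟩
    have := hlip s hs 0 h0
    simp only [hf0, mul_zero, sub_zero] at this
    rwa [abs_of_nonneg hs.1] at this
  have habs2 : ∀ s ∈ Set.Icc (0:ℝ) b, |ω₀ * s - f s| ≤ C * (b - s) := by
    intro s hs
    have hbmem : b ∈ Set.Icc (0:ℝ) b := ⟨hb.le, le_rfl⟩
    have := hlip s hs b hbmem
    rw [hhb, sub_zero] at this
    rwa [abs_of_nonpos (by linarith [hs.2] : s - b ≤ 0), neg_sub] at this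
  refine ⟨C, hCpos, fun s hs => ⟨?_, ?_⟩⟩
  · have hmono : HH ω₀ f s ≤ ∫ r in (0:ℝ)..s, C * r := by
      apply intervalIntegral.integral_mono_on hs.1 (hc'.intervalIntegrable 0 s)
        ((continuous_const.mul continuous_id).intervalIntegrable 0 s)
      intro r hr
      exact le_trans (le_abs_self _) (habs1 r ⟨hr.1, le_trans hr.2 hs.2⟩)
    have hval : (∫ r in (0:ℝ)..s, C * r) = C * (s ^ 2 / 2) := by
      rw [intervalIntegral.integral_const_mul, integral_id]; ring
    rw [hval] at hmono; nlinarith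
  · have hadd := intervalIntegral.integral_add_adjacent_intervals (μ := volume)
      (hc'.intervalIntegrable 0 s) (hc'.intervalIntegrable s b)
    have hHs : HH ω₀ f s = -(∫ r in s..b, (ω₀ * r - f r)) := by
      have : HH ω₀ f s + (∫ r in s..b, (ω₀ * r - f r)) = HH ω₀ f b := hadd
      rw [hHb] at this; linarith
    have hmono : (∫ r in s..b, -(C * (b - r))) ≤ ∫ r in s..b, (ω₀ * r - f r) := by
      apply intervalIntegral.integral_mono_on hs.2
        ((by fun_prop : Continuous fun r : ℝ => -(C * (b - r))).intervalIntegrable s b)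
        (hc'.intervalIntegrable s b)
      intro r hr
      have := habs2 r ⟨le_trans hs.1 hr.1, hr.2⟩
      have := neg_abs_le (ω₀ * r - f r)
      linarith
    have hval1 : (∫ r in s..b, (b - r)) = (b - s) ^ 2 / 2 := by
      have := intervalIntegral.integral_comp_sub_left (a := s) (b := b) (fun x : ℝ => x) b
      rw [this, integral_id]; ring_nf
    have hval : (∫ r in s..b, -(C * (b - r))) = -(C * ((b - s) ^ 2 / 2)) := by
      rw [intervalIntegral.integral_neg, intervalIntegral.integral_const_mul, hval1]
    rw [hval] at hmono
    rw [hHs]; nlinarith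

end KinkProofAux

open KinkProofAux in
/-- Existence of the kink profile: let `ω₀ > 0` and `f : ℝ → ℝ` be `C¹` with `f(0) = 0`,
`f'(0) = 0`; set `h(s) = ω₀ s − f(s)` and `H(s) = ∫₀^s h`. If there is `b > 0` with
`h(b) = 0`, `h'(b) > 0`, `H(b) = 0` and `H > 0` on `(0, b)`, then there is a `C²` function
`φ_K : ℝ → ℝ` solving `−φ_K'' + ω₀ φ_K − f(φ_K) = 0` on `ℝ`, with `0 < φ_K < b`, strictly
decreasing, `φ_K(x) → b` as `x → −∞` and `φ_K(x) → 0` as `x → +∞`. -/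
theorem kink_profile_exists (ω₀ : ℝ) (hω₀ : 0 < ω₀)
    (f : ℝ → ℝ) (hf : ContDiff ℝ 1 f) (hf0 : f 0 = 0) (hf'0 : deriv f 0 = 0)
    (b : ℝ) (hb : 0 < b)
    (hhb : ω₀ * b - f b = 0)
    (hh'b : 0 < deriv (fun s : ℝ => ω₀ * s - f s) b)
    (hHb : (∫ r in (0:ℝ)..b, (ω₀ * r - f r)) = 0)
    (hHpos : ∀ s ∈ Set.Ioo (0:ℝ) b, 0 < ∫ r in (0:ℝ)..s, (ω₀ * r - f r)) :
    ∃ φK : ℝ → ℝ, ContDiff ℝ 2 φK ∧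
      (∀ x : ℝ, -(deriv (deriv φK) x) + ω₀ * φK x - f (φK x) = 0) ∧
      (∀ x : ℝ, 0 < φK x ∧ φK x < b) ∧
      StrictAnti φK ∧
      Tendsto φK atBot (nhds b) ∧
      Tendsto φK atTop (nhds 0) := by
  classical
  have hc : Continuous f := hf.continuous
  have hHpos' : ∀ s ∈ Set.Ioo (0:ℝ) b, 0 < HH ω₀ f s := hHpos
  have hHb' : HH ω₀ f b = 0 := hHb
  obtain ⟨C, hCpos, hCbd⟩ := exists_bound hf hf0 hb hhb hHb'
  have hbd1 : ∀ s ∈ Set.Icc (0:ℝ) b, 2 * HH ω₀ f s ≤ C * s ^ 2 := fun s hs => (hCbd s hs).1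
  have hbd2 : ∀ s ∈ Set.Icc (0:ℝ) b, 2 * HH ω₀ f s ≤ C * (b - s) ^ 2 := fun s hs => (hCbd s hs).2
  have hsurj := XX_surj hHpos' hc hb hCpos hbd1 hbd2
  set φ : ℝ → ℝ := fun x => Classical.choose (hsurj x) with hφdef
  have hφmem : ∀ x, φ x ∈ Set.Ioo 0 b := fun x => (Classical.choose_spec (hsurj x)).1
  have hφX : ∀ x, XX ω₀ f b (φ x) = x := fun x => (Classical.choose_spec (hsurj x)).2
  have hlt_iff : ∀ {a x : ℝ}, a ∈ Set.Ioo 0 b → (φ x < a ↔ XX ω₀ f b a < x) := by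
    intro a x ha
    constructor
    · intro hlt
      rw [← hφX x]
      exact XX_anti hHpos' hc (hφmem x) ha hlt
    · intro hlt
      by_contra hle
      push_neg at hle
      rcases eq_or_lt_of_le hle with rfl | hlt2
      · rw [hφX x] at hlt; exact lt_irrefl _ hlt
      · have := XX_anti hHpos' hc ha (hφmem x) hlt2
        rw [hφX x] at this; linarith
  have hgt_iff : ∀ {a x : ℝ}, a ∈ Set.Ioo 0 b → (a < φ x ↔ x < XX ω₀ f b a) := by
    intro a x ha
    constructor
    · intro hlt
      rw [← hφX x]
      exact XX_anti hHpos' hc ha (hφmem x) hlt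
    · intro hlt
      by_contra hle
      push_neg at hle
      rcases eq_or_lt_of_le hle with h | hlt2
      · rw [← h, hφX x] at hlt; exact lt_irrefl _ hlt
      · have := XX_anti hHpos' hc (hφmem x) ha hlt2
        rw [hφX x] at this; linarith
  have hφanti : StrictAnti φ := by
    intro x y hxy
    exact (hlt_iff (hφmem x)).2 (by rw [hφX x]; exact hxy)
  have hφcont : Continuous φ := by
    rw [continuous_iff_continuousAt]
    intro x
    rw [ContinuousAt, tendsto_order]
    constructor
    · intro a ha
      rcases le_or_gt a 0 with h0 | h0
      · exact Eventually.of_forall fun x' => lt_of_le_of_lt h0 (hφmem x').1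
      · have haIoo : a ∈ Set.Ioo 0 b := ⟨h0, lt_trans ha (hφmem x).2⟩
        have hxlt : x < XX ω₀ f b a := (hgt_iff haIoo).1 ha
        filter_upwards [Iio_mem_nhds hxlt] with x' hx'
        exact (hgt_iff haIoo).2 hx'
    · intro a ha
      rcases le_or_gt b a with h0 | h0
      · exact Eventually.of_forall fun x' => lt_of_lt_of_le (hφmem x').2 h0
      · have haIoo : a ∈ Set.Ioo 0 b := ⟨lt_trans (hφmem x).1 ha, h0⟩
        have hxlt : XX ω₀ f b a < x := (hlt_iff haIoo).1 ha
        filter_upwards [Ioi_mem_nhds hxlt] with x' hx'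
        exact (hlt_iff haIoo).2 hx'
  have hsqpos : ∀ x, 0 < Real.sqrt (2 * HH ω₀ f (φ x)) := fun x => sqrt_pos' hHpos' (hφmem x)
  have hφderiv : ∀ x, HasDerivAt φ (-(Real.sqrt (2 * HH ω₀ f (φ x)))) x := by
    intro x
    have hX := XX_hasDeriv hHpos' hc hb (hφmem x)
    have hne : -(FF ω₀ f (φ x)) ≠ 0 := neg_ne_zero.2 (FF_pos hHpos' (hφmem x)).ne'
    have h := HasDerivAt.of_local_left_inverse hφcont.continuousAt hX hne
      (Eventually.of_forall hφX)
    have heq : (-(FF ω₀ f (φ x)))⁻¹ = -(Real.sqrt (2 * HH ω₀ f (φ x))) := by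
      rw [show FF ω₀ f (φ x) = (Real.sqrt (2 * HH ω₀ f (φ x)))⁻¹ from rfl, inv_neg, inv_inv]
    rwa [heq] at h
  have hψ : deriv φ = fun x => -(Real.sqrt (2 * HH ω₀ f (φ x))) :=
    funext fun x => (hφderiv x).deriv
  have hψderiv : ∀ x, HasDerivAt (deriv φ) (ω₀ * φ x - f (φ x)) x := by
    intro x
    rw [hψ]
    have h1 : HasDerivAt (fun x => 2 * HH ω₀ f (φ x))
        (2 * ((ω₀ * φ x - f (φ x)) * (-(Real.sqrt (2 * HH ω₀ f (φ x)))))) x :=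
      ((HH_hasDeriv hc (φ x)).comp x (hφderiv x)).const_mul 2
    have h2 := (Real.hasDerivAt_sqrt (x := 2 * HH ω₀ f (φ x))
      (by have := hHpos' (φ x) (hφmem x); positivity)).comp x h1
    have h3 := h2.neg
    refine h3.congr_deriv ?_
    have hs := (hsqpos x).ne'
    set s := Real.sqrt (2 * HH ω₀ f (φ x)) with hsdef
    field_simp
  have hψ' : deriv (deriv φ) = fun x => ω₀ * φ x - f (φ x) :=
    funext fun x => (hψderiv x).deriv
  have hφdiff : Differentiable ℝ φ := fun x => (hφderiv x).differentiableAt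
  refine ⟨φ, ?_, ?_, fun x => ⟨(hφmem x).1, (hφmem x).2⟩, hφanti, ?_, ?_⟩
  · have h2 : ContDiff ℝ (0 + 1) (deriv φ) := by
      rw [contDiff_succ_iff_deriv]
      refine ⟨fun x => (hψderiv x).differentiableAt, by simp, ?_⟩
      rw [hψ', contDiff_zero]
      exact (continuous_const.mul hφcont).sub (hc.comp hφcont)
    have h21 : (2 : WithTop ℕ∞) = 1 + 1 := by norm_num
    rw [h21, contDiff_succ_iff_deriv]
    refine ⟨hφdiff, by simp, ?_⟩
    simpa using h2
  · intro x
    simp only [hψ']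
    ring
  · rw [tendsto_order]
    constructor
    · intro a ha
      rcases le_or_gt a 0 with h0 | h0
      · exact Eventually.of_forall fun x' => lt_of_le_of_lt h0 (hφmem x').1
      · have haIoo : a ∈ Set.Ioo 0 b := ⟨h0, ha⟩
        filter_upwards [eventually_lt_atBot (XX ω₀ f b a)] with x hx
        exact (hgt_iff haIoo).2 hx
    · intro a ha
      exact Eventually.of_forall fun x' => lt_of_lt_of_le (hφmem x').2 ha.le
  · rw [tendsto_order]
    constructor
    · intro a ha
      exact Eventually.of_forall fun x' => lt_of_le_of_lt ha.le (hφmem x').1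
    · intro a ha
      rcases le_or_gt b a with h0 | h0
      · exact Eventually.of_forall fun x' => lt_of_lt_of_le (hφmem x').2 h0
      · have haIoo : a ∈ Set.Ioo 0 b := ⟨ha, h0⟩
        filter_upwards [eventually_gt_atTop (XX ω₀ f b a)] with x hx
        exact (hlt_iff haIoo).2 hx
end

section
/- Uniqueness up to translation of the kink profile: let ω₀ > 0 and let f : ℝ → ℝ be continuously differentiable with f(0) = 0 and f'(0) = 0; set h(s) := ω₀·s − f(s) and H(s) := ∫₀^s h(r) dr, and assume there is b > 0 with h(b) = 0, h'(b) > 0, H(b) = 0, and H(s) > 0 for all s ∈ (0, b). If φ₁, φ₂ : ℝ → ℝ are twice continuously differentiable functions, each satisfying −φ'' + ω₀·φ − f(φ) = 0 on ℝ together with 0 < φ(x) < b for all x, φ(x) → b as x → −∞ and φ(x) → 0 as x → +∞, then there exists x₀ ∈ ℝ such that φ₂(x) = φ₁(x − x₀) for all x ∈ ℝ. -/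
open Filter

/-- Any kink-type solution has derivative `-√(2 H (φ x))` where `H` is the primitive of
`h(s) = ω₀ s - f s`. -/
lemma kink_deriv_eq (ω₀ : ℝ) (f : ℝ → ℝ) (hf : ContDiff ℝ 1 f)
    (b : ℝ)
    (hHpos : ∀ s ∈ Set.Ioo (0:ℝ) b, 0 < ∫ r in (0:ℝ)..s, (ω₀ * r - f r))
    (φ : ℝ → ℝ) (hφ : ContDiff ℝ 2 φ)
    (heq : ∀ x : ℝ, -(deriv (deriv φ) x) + ω₀ * φ x - f (φ x) = 0)
    (hrange : ∀ x : ℝ, 0 < φ x ∧ φ x < b)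
    (htop : Tendsto φ atTop (nhds 0)) :
    ∀ x, deriv φ x = -Real.sqrt (2 * ∫ r in (0:ℝ)..(φ x), (ω₀ * r - f r)) := by
  set H : ℝ → ℝ := fun s => ∫ r in (0:ℝ)..s, (ω₀ * r - f r) with hHdef
  have hcont : Continuous fun s : ℝ => ω₀ * s - f s :=
    (continuous_const.mul continuous_id).sub hf.continuous
  have hH : ∀ s, HasDerivAt H (ω₀ * s - f s) s := fun s =>
    (hcont.integral_hasStrictDerivAt 0 s).hasDerivAt
  have H0 : H 0 = 0 := intervalIntegral.integral_same
  have Hcont : Continuous H := by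
    have : Differentiable ℝ H := fun s => (hH s).differentiableAt
    exact this.continuous
  have HposAll : ∀ x, 0 < H (φ x) := fun x => hHpos _ ⟨(hrange x).1, (hrange x).2⟩
  show ∀ x, deriv φ x = -Real.sqrt (2 * H (φ x))
  clear hHdef hHpos
  clear_value H
  have hφd : Differentiable ℝ φ := hφ.differentiable (by norm_num)
  have hφ' : ∀ x, HasDerivAt φ (deriv φ x) x := fun x => (hφd x).hasDerivAt
  have h2 : (2 : WithTop ℕ∞) = 1 + 1 := by norm_num
  have hφderiv : ContDiff ℝ 1 (deriv φ) := by
    rw [h2] at hφ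
    exact (contDiff_succ_iff_deriv.mp hφ).2.2
  have hφ'd : Differentiable ℝ (deriv φ) := hφderiv.differentiable one_ne_zero
  have hφ'c : Continuous (deriv φ) := hφ'd.continuous
  have hφ'' : ∀ x, HasDerivAt (deriv φ) (ω₀ * φ x - f (φ x)) x := by
    intro x
    have h := (hφ'd x).hasDerivAt
    have he : deriv (deriv φ) x = ω₀ * φ x - f (φ x) := by linarith [heq x]
    rwa [he] at h
  -- energy is constant
  obtain ⟨E, hE⟩ : ∃ E : ℝ, ∀ x, (deriv φ x) ^ 2 / 2 - H (φ x) = E := by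
    refine ⟨(deriv φ 0) ^ 2 / 2 - H (φ 0), fun x => ?_⟩
    have hg' : ∀ x, HasDerivAt (fun x => (deriv φ x) ^ 2 / 2 - H (φ x)) 0 x := by
      intro x
      have h1 : HasDerivAt (fun x => (deriv φ x) ^ 2 / 2)
          (2 * (deriv φ x) ^ 1 * (ω₀ * φ x - f (φ x)) / 2) x :=
        ((hφ'' x).pow 2).div_const 2
      have hcomp : HasDerivAt (fun x => H (φ x)) ((ω₀ * φ x - f (φ x)) * deriv φ x) x :=
        (hH (φ x)).comp x (hφ' x)
      have := h1.sub hcomp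
      exact this.congr_deriv (by ring)
    exact is_const_of_deriv_eq_zero (fun x => (hg' x).differentiableAt)
      (fun x => (hg' x).deriv) x 0
  have key : ∀ x, (deriv φ x) ^ 2 = 2 * E + 2 * H (φ x) := fun x => by linarith [hE x]
  have HposAll' := HposAll
  -- E ≥ 0
  have Htop0 : Tendsto (fun x => H (φ x)) atTop (nhds 0) := by
    have := (Hcont.tendsto 0).comp htop
    rwa [H0] at this
  have hE0 : 0 ≤ E := by
    have hlim : Tendsto (fun x => (deriv φ x) ^ 2 / 2) atTop (nhds E) := by
      have h1 : Tendsto (fun x => E + H (φ x)) atTop (nhds (E + 0)) :=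
        tendsto_const_nhds.add Htop0
      rw [add_zero] at h1
      refine h1.congr fun x => ?_
      have := key x
      linarith
    exact ge_of_tendsto' hlim fun x => by positivity
  -- deriv φ never vanishes
  have hne : ∀ x, deriv φ x ≠ 0 := by
    intro x h
    have := key x
    rw [h] at this
    nlinarith [HposAll x]
  -- deriv φ is everywhere negative
  have hsign : ∀ x, deriv φ x < 0 := by
    by_contra hcon
    push_neg at hcon
    obtain ⟨x₁, hx₁⟩ := hcon
    have hx₁' : 0 < deriv φ x₁ := lt_of_le_of_ne hx₁ (Ne.symm (hne x₁))
    have allpos : ∀ y, 0 < deriv φ y := by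
      intro y
      by_contra hy
      push_neg at hy
      have hy' : deriv φ y < 0 := lt_of_le_of_ne hy (hne y)
      have hmem : (0 : ℝ) ∈ Set.uIcc (deriv φ y) (deriv φ x₁) :=
        Set.mem_uIcc.mpr (Or.inl ⟨le_of_lt hy', le_of_lt hx₁'⟩)
      obtain ⟨z, _, hz⟩ := intermediate_value_uIcc (hφ'c.continuousOn) hmem
      exact hne z hz
    have hmono : StrictMono φ := strictMono_of_deriv_pos allpos
    have hev : ∀ᶠ x in atTop, φ x < φ 0 := htop.eventually_lt_const (hrange 0).1
    obtain ⟨x, hx, hx0⟩ := (hev.and (eventually_ge_atTop (0:ℝ))).exists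
    have : φ 0 ≤ φ x := hmono.le_iff_le.mpr hx0
    linarith
  -- E = 0
  have hEzero : E = 0 := by
    by_contra hEne
    have hEpos : 0 < E := lt_of_le_of_ne hE0 (Ne.symm hEne)
    obtain ⟨m, hm, hmsq⟩ : ∃ m : ℝ, 0 < m ∧ m ^ 2 = 2 * E :=
      ⟨Real.sqrt (2 * E), Real.sqrt_pos.mpr (by linarith),
        Real.sq_sqrt (by linarith)⟩
    have derivbound : ∀ x, deriv φ x ≤ -m := by
      intro x
      have h1 : Real.sqrt (m ^ 2) ≤ Real.sqrt ((deriv φ x) ^ 2) :=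
        Real.sqrt_le_sqrt (by nlinarith [HposAll x, key x])
      rw [Real.sqrt_sq_eq_abs, Real.sqrt_sq_eq_abs, abs_of_neg (hsign x),
        abs_of_pos hm] at h1
      linarith
    have hanti : Antitone (fun x => φ x + m * x) := by
      apply antitone_of_deriv_nonpos
      · exact hφd.add ((differentiable_id.const_mul m))
      · intro x
        have hd : HasDerivAt (fun x => φ x + m * x) (deriv φ x + m * 1) x :=
          (hφ' x).add ((hasDerivAt_id x).const_mul m)
        rw [hd.deriv]
        have := derivbound x
        linarith
    have hX0 : (0:ℝ) ≤ (φ 0 + 1) / m :=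
      div_nonneg (by linarith [(hrange 0).1]) hm.le
    have hA := hanti hX0
    simp only [mul_zero, add_zero] at hA
    have hmX : m * ((φ 0 + 1) / m) = φ 0 + 1 := by
      field_simp
    have : φ ((φ 0 + 1) / m) ≤ -1 := by linarith
    linarith [(hrange ((φ 0 + 1) / m)).1]
  -- conclude
  intro x
  have h2x : (deriv φ x) ^ 2 = 2 * H (φ x) := by
    have := key x
    rw [hEzero] at this
    linarith
  have hfin : Real.sqrt (2 * H (φ x)) = -deriv φ x := by
    rw [← h2x, Real.sqrt_sq_eq_abs, abs_of_neg (hsign x)]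
  linarith [hfin]

/-- Uniqueness up to translation of the kink profile: under the kink assumption on
`h(s) = ω₀ s − f(s)` (there is `b > 0` with `h(b) = 0`, `h'(b) > 0`, `∫₀^b h = 0` and
`∫₀^s h > 0` on `(0,b)`), any two `C²` solutions of `−φ'' + ω₀ φ − f(φ) = 0` on `ℝ` with
`0 < φ < b`, `φ(x) → b` as `x → −∞` and `φ(x) → 0` as `x → +∞` coincide up to a
translation. -/
theorem kink_profile_unique_up_to_translation (ω₀ : ℝ) (hω₀ : 0 < ω₀)
    (f : ℝ → ℝ) (hf : ContDiff ℝ 1 f) (hf0 : f 0 = 0) (hf'0 : deriv f 0 = 0)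
    (b : ℝ) (hb : 0 < b)
    (hhb : ω₀ * b - f b = 0)
    (hh'b : 0 < deriv (fun s : ℝ => ω₀ * s - f s) b)
    (hHb : (∫ r in (0:ℝ)..b, (ω₀ * r - f r)) = 0)
    (hHpos : ∀ s ∈ Set.Ioo (0:ℝ) b, 0 < ∫ r in (0:ℝ)..s, (ω₀ * r - f r))
    (φ₁ φ₂ : ℝ → ℝ)
    (hφ₁ : ContDiff ℝ 2 φ₁) (hφ₂ : ContDiff ℝ 2 φ₂)
    (heq₁ : ∀ x : ℝ, -(deriv (deriv φ₁) x) + ω₀ * φ₁ x - f (φ₁ x) = 0)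
    (heq₂ : ∀ x : ℝ, -(deriv (deriv φ₂) x) + ω₀ * φ₂ x - f (φ₂ x) = 0)
    (hrange₁ : ∀ x : ℝ, 0 < φ₁ x ∧ φ₁ x < b)
    (hrange₂ : ∀ x : ℝ, 0 < φ₂ x ∧ φ₂ x < b)
    (hbot₁ : Tendsto φ₁ atBot (nhds b)) (htop₁ : Tendsto φ₁ atTop (nhds 0))
    (hbot₂ : Tendsto φ₂ atBot (nhds b)) (htop₂ : Tendsto φ₂ atTop (nhds 0)) :
    ∃ x₀ : ℝ, ∀ x : ℝ, φ₂ x = φ₁ (x - x₀) := by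
  set H : ℝ → ℝ := fun s => ∫ r in (0:ℝ)..s, (ω₀ * r - f r) with hHdef
  have hcont : Continuous fun s : ℝ => ω₀ * s - f s :=
    (continuous_const.mul continuous_id).sub hf.continuous
  have hH : ∀ s, HasDerivAt H (ω₀ * s - f s) s := fun s =>
    (hcont.integral_hasStrictDerivAt 0 s).hasDerivAt
  have Hcont : Continuous H := by
    have : Differentiable ℝ H := fun s => (hH s).differentiableAt
    exact this.continuous
  have d1 : ∀ x, deriv φ₁ x = -Real.sqrt (2 * H (φ₁ x)) :=
    kink_deriv_eq ω₀ f hf b hHpos φ₁ hφ₁ heq₁ hrange₁ htop₁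
  have d2 : ∀ x, deriv φ₂ x = -Real.sqrt (2 * H (φ₂ x)) :=
    kink_deriv_eq ω₀ f hf b hHpos φ₂ hφ₂ heq₂ hrange₂ htop₂
  clear hHdef hHpos hHb
  clear_value H
  -- find the matching point a with φ₁ a = φ₂ 0
  have hc : φ₂ 0 ∈ Set.Ioo (0:ℝ) b := ⟨(hrange₂ 0).1, (hrange₂ 0).2⟩
  obtain ⟨xm, hxm⟩ := (hbot₁.eventually_const_lt hc.2).exists
  obtain ⟨xp, hxp⟩ := (htop₁.eventually_lt_const hc.1).exists
  have hmem : φ₂ 0 ∈ Set.uIcc (φ₁ xp) (φ₁ xm) :=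
    Set.mem_uIcc.mpr (Or.inl ⟨le_of_lt hxp, le_of_lt hxm⟩)
  obtain ⟨a, _, ha⟩ := intermediate_value_uIcc (hφ₁.continuous.continuousOn) hmem
  -- derivative bound
  obtain ⟨M, hM0, hsqbound⟩ : ∃ M : ℝ, 0 ≤ M ∧
      ∀ s ∈ Set.Icc (0:ℝ) b, Real.sqrt (2 * H s) ≤ M := by
    obtain ⟨C, hC⟩ := (isCompact_Icc : IsCompact (Set.Icc (0:ℝ) b)).exists_bound_of_continuousOn
      Hcont.continuousOn
    refine ⟨Real.sqrt (2 * C), Real.sqrt_nonneg _, fun s hs => ?_⟩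
    apply Real.sqrt_le_sqrt
    have h1 := hC s hs
    rw [Real.norm_eq_abs] at h1
    have h2 := abs_le.mp h1
    linarith [h2.2]
  -- set-up the first-order system
  set S : Set (ℝ × ℝ) := Set.Icc (0:ℝ) b ×ˢ Set.Icc (-M) M with hSdef
  set v : ℝ × ℝ → ℝ × ℝ := fun p => (p.2, ω₀ * p.1 - f p.1) with hvdef
  have hvC : ContDiff ℝ 1 v :=
    contDiff_snd.prodMk ((contDiff_const.mul contDiff_fst).sub (hf.comp contDiff_fst))
  have hScompact : IsCompact S := isCompact_Icc.prod isCompact_Icc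
  have hSconvex : Convex ℝ S := (convex_Icc _ _).prod (convex_Icc _ _)
  obtain ⟨K0, hK0⟩ := hScompact.exists_bound_of_continuousOn
    (hvC.continuous_fderiv one_ne_zero).continuousOn
  have hlip : LipschitzOnWith K0.toNNReal v S := by
    apply Convex.lipschitzOnWith_of_nnnorm_fderiv_le
      (fun x _ => hvC.differentiable one_ne_zero x) _ hSconvex
    intro x hx
    have := hK0 x hx
    rw [← norm_toNNReal]
    exact Real.toNNReal_le_toNNReal this
  -- trajectories
  have mkDeriv : ∀ (φ : ℝ → ℝ), ContDiff ℝ 2 φ →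
      (∀ x : ℝ, -(deriv (deriv φ) x) + ω₀ * φ x - f (φ x) = 0) →
      ∀ t₀ x, HasDerivAt (fun x => (φ (x + t₀), deriv φ (x + t₀)))
        (v (φ (x + t₀), deriv φ (x + t₀))) x := by
    intro φ hφ heq t₀ x
    have hφd : Differentiable ℝ φ := hφ.differentiable (by norm_num)
    have h2 : (2 : WithTop ℕ∞) = 1 + 1 := by norm_num
    have hφderiv : ContDiff ℝ 1 (deriv φ) := by
      rw [h2] at hφ
      exact (contDiff_succ_iff_deriv.mp hφ).2.2
    have hφ'd : Differentiable ℝ (deriv φ) := hφderiv.differentiable one_ne_zero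
    have hshift : HasDerivAt (fun x : ℝ => x + t₀) 1 x := (hasDerivAt_id x).add_const t₀
    have c1 : HasDerivAt (fun x => φ (x + t₀)) (deriv φ (x + t₀)) x := by
      have := ((hφd (x + t₀)).hasDerivAt).comp x hshift
      exact this.congr_deriv (mul_one _)
    have c2 : HasDerivAt (fun x => deriv φ (x + t₀)) (ω₀ * φ (x + t₀) - f (φ (x + t₀))) x := by
      have hdd : HasDerivAt (deriv φ) (ω₀ * φ (x + t₀) - f (φ (x + t₀))) (x + t₀) := by
        have h := (hφ'd (x + t₀)).hasDerivAt
        have he : deriv (deriv φ) (x + t₀) = ω₀ * φ (x + t₀) - f (φ (x + t₀)) := by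
          linarith [heq (x + t₀)]
        rwa [he] at h
      have := hdd.comp x hshift
      exact this.congr_deriv (mul_one _)
    exact c1.prodMk c2
  have memS : ∀ (φ : ℝ → ℝ),
      (∀ x : ℝ, 0 < φ x ∧ φ x < b) →
      (∀ x, deriv φ x = -Real.sqrt (2 * H (φ x))) →
      ∀ y : ℝ, (φ y, deriv φ y) ∈ S := by
    intro φ hr hd y
    refine Set.mem_prod.mpr ⟨⟨(hr y).1.le, (hr y).2.le⟩, ?_⟩
    show deriv φ y ∈ Set.Icc (-M) M
    rw [Set.mem_Icc, hd y]
    have h1 := hsqbound (φ y) ⟨(hr y).1.le, (hr y).2.le⟩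
    have h2 := Real.sqrt_nonneg (2 * H (φ y))
    constructor <;> linarith
  -- main uniqueness
  have hinit : (φ₁ (0 + a), deriv φ₁ (0 + a)) = (φ₂ (0 + 0), deriv φ₂ (0 + 0)) := by
    have hda : deriv φ₁ a = deriv φ₂ 0 := by
      rw [d1 a, d2 0, ha]
    simp only [zero_add, add_zero]
    exact Prod.ext ha hda
  refine ⟨-a, fun x => ?_⟩
  have hx : x ∈ Set.Ioo (-(|x| + 1)) (|x| + 1) := by
    constructor
    · have := neg_abs_le x; linarith
    · have := le_abs_self x; linarith
  have h0 : (0:ℝ) ∈ Set.Ioo (-(|x| + 1)) (|x| + 1) := by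
    have := abs_nonneg x
    constructor <;> linarith
  have huniq := ODE_solution_unique_of_mem_Ioo
    (v := fun _ : ℝ => v) (s := fun _ : ℝ => S) (K := K0.toNNReal)
    (fun _ _ => hlip) h0
    (f := fun y => (φ₁ (y + a), deriv φ₁ (y + a)))
    (g := fun y => (φ₂ (y + 0), deriv φ₂ (y + 0)))
    (fun t _ => ⟨mkDeriv φ₁ hφ₁ heq₁ a t, memS φ₁ hrange₁ d1 (t + a)⟩)
    (fun t _ => ⟨mkDeriv φ₂ hφ₂ heq₂ 0 t, memS φ₂ hrange₂ d2 (t + 0)⟩)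
    hinit
  have hxx := huniq hx
  have h1 : φ₁ (x + a) = φ₂ (x + 0) := congrArg Prod.fst hxx
  rw [add_zero] at h1
  rw [sub_neg_eq_add]
  exact h1.symm
end
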